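/- arXiv:1309.5052 — 2 statements merged into one kernel-verified Lean document; each statement's English description precedes it below -/
import Mathlib

section
/- In the field of rational functions ℚ(a, m) (the fraction field of the polynomial ring in two variables a and m over ℚ), the HOMFLY polynomial of the knot 8₉, namely P(8₉) = −2a²m⁴ + 5a²m² − 4m⁴ + 6m² − 2 + a⁴m² − a⁴ − 3a² + m⁶ − a⁻²m⁴ + 2a⁻²m² − a⁻², is not equal to the HOMFLY polynomial of the connected sum 4₁ # 4₁, namely P(4₁ # 4₁) = (m² − a² − 1 − a⁻²)². Hence the 2-bridge knot 8₉ and the 3-bridge knot 4₁ # 4₁, which have the same Jones polynomial, are distinguished by the HOMFLY polynomial. -/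
/-- In the field of rational functions `ℚ(a, m)`, the HOMFLY polynomial of the
2-bridge knot `8₉` differs from that of the 3-bridge knot `4₁ # 4₁ `
(which have the same Jones polynomial):
`P(8₉) = −2a²m⁴ + 5a²m² − 4m⁴ + 6m² − 2 + a⁴m² − a⁴ − 3a² + m⁶ − a⁻²m⁴ + 2a⁻²m² − a⁻²`
is not equal to `P(4₁ # 4₁) = (m² − a² − 1 − a⁻²)²`. -/
theorem homfly_eight_nine_ne_homfly_fig8_connected_sum_fig8 :
    let a : FractionRing (MvPolynomial (Fin 2) ℚ) :=
      algebraMap (MvPolynomial (Fin 2) ℚ) _ (MvPolynomial.X 0)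
    let m : FractionRing (MvPolynomial (Fin 2) ℚ) :=
      algebraMap (MvPolynomial (Fin 2) ℚ) _ (MvPolynomial.X 1)
    (-2 * a ^ 2 * m ^ 4 + 5 * a ^ 2 * m ^ 2 - 4 * m ^ 4 + 6 * m ^ 2 - 2
        + a ^ 4 * m ^ 2 - a ^ 4 - 3 * a ^ 2 + m ^ 6
        - (a⁻¹) ^ 2 * m ^ 4 + 2 * (a⁻¹) ^ 2 * m ^ 2 - (a⁻¹) ^ 2)
      ≠ (m ^ 2 - a ^ 2 - 1 - (a⁻¹) ^ 2) ^ 2 := by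
  intro a m h
  have ha : a ≠ 0 := by
    rw [Ne, show a = algebraMap (MvPolynomial (Fin 2) ℚ) _ (MvPolynomial.X 0) from rfl,
      IsFractionRing.to_map_eq_zero_iff]
    exact MvPolynomial.X_ne_zero 0
  field_simp at h
  set A : MvPolynomial (Fin 2) ℚ := MvPolynomial.X 0 with hA
  set M : MvPolynomial (Fin 2) ℚ := MvPolynomial.X 1 with hM
  have h2 : ((-(2 * A ^ 2 * M ^ 4) + 5 * A ^ 2 * M ^ 2 - 4 * M ^ 4 + 6 * M ^ 2 - 2
        + A ^ 4 * M ^ 2 - A ^ 4 - 3 * A ^ 2 + M ^ 6) * A ^ 2 - M ^ 4 + 2 * M ^ 2 - 1)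
        * (A ^ 2) ^ 2 =
      ((M ^ 2 - A ^ 2 - 1) * A ^ 2 - 1) ^ 2 * A ^ 2 :=
    IsFractionRing.injective (MvPolynomial (Fin 2) ℚ) (FractionRing (MvPolynomial (Fin 2) ℚ))
      (by simp only [map_mul, map_add, map_sub, map_neg, map_pow, map_one, map_ofNat]
          rw [show algebraMap (MvPolynomial (Fin 2) ℚ) (FractionRing (MvPolynomial (Fin 2) ℚ)) A = a from rfl,
            show algebraMap (MvPolynomial (Fin 2) ℚ) (FractionRing (MvPolynomial (Fin 2) ℚ)) M = m from rfl]
          linear_combination a ^ 2 * h)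
  have h3 := congrArg (MvPolynomial.eval (fun i => if i = 0 then (1 : ℚ) else 0)) h2
  simp [hA, hM] at h3
  norm_num at h3
end

section
/- In the field of rational functions ℚ(a, m) (the fraction field of the polynomial ring in two variables a and m over ℚ), the HOMFLY polynomial of the 2-bridge knot K₃, namely P(K₃) = (a¹² − 2a¹⁰m² + a⁸m² + a⁸m⁴ − 2a⁶m⁴ + a⁴m⁴ + 2a⁴m² − 2a²m² + a¹⁰ − a⁶ + a⁶m² − a⁴ + 1)/a⁴, is not equal to the HOMFLY polynomial of the connected sum K₄ = 4₁ # 8₃, namely P(4₁ # 8₃) = (m² − a² − 1 − a⁻²)·(a⁸ − a⁶m² + 2a⁴m² − a²m² − a⁴ + 1)/a⁴. Hence K₃ and K₄, which have the same Jones polynomial, are distinguished by the HOMFLY polynomial. -/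
set_option maxHeartbeats 1600000


/-- In the field of rational functions `ℚ(a, m)`, the HOMFLY polynomial of the
2-bridge knot `K₃` differs from that of the connected sum `K₄ = 4₁ # 8₃`
(which have the same Jones polynomial):
`P(K₃) = (a¹² − 2a¹⁰m² + a⁸m² + a⁸m⁴ − 2a⁶m⁴ + a⁴m⁴ + 2a⁴m² − 2a²m² + a¹⁰ − a⁶
  + a⁶m² − a⁴ + 1)/a⁴`
is not equal to
`P(4₁ # 8₃) = (m² − a² − 1 − a⁻²)·(a⁸ − a⁶m² + 2a⁴m² − a²m² − a⁴ + 1)/a⁴`. -/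
theorem homfly_K3_ne_homfly_fig8_connected_sum_eight_three :
    let a : FractionRing (MvPolynomial (Fin 2) ℚ) :=
      algebraMap (MvPolynomial (Fin 2) ℚ) _ (MvPolynomial.X 0)
    let m : FractionRing (MvPolynomial (Fin 2) ℚ) :=
      algebraMap (MvPolynomial (Fin 2) ℚ) _ (MvPolynomial.X 1)
    (a ^ 12 - 2 * a ^ 10 * m ^ 2 + a ^ 8 * m ^ 2 + a ^ 8 * m ^ 4 - 2 * a ^ 6 * m ^ 4
        + a ^ 4 * m ^ 4 + 2 * a ^ 4 * m ^ 2 - 2 * a ^ 2 * m ^ 2 + a ^ 10 - a ^ 6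
        + a ^ 6 * m ^ 2 - a ^ 4 + 1) / a ^ 4
      ≠ (m ^ 2 - a ^ 2 - 1 - (a⁻¹) ^ 2)
          * (a ^ 8 - a ^ 6 * m ^ 2 + 2 * a ^ 4 * m ^ 2 - a ^ 2 * m ^ 2 - a ^ 4 + 1) / a ^ 4 := by
  intro a m
  have inj := IsFractionRing.injective (MvPolynomial (Fin 2) ℚ)
      (FractionRing (MvPolynomial (Fin 2) ℚ))
  have ha : a ≠ 0 := by
    simpa [a] using (map_ne_zero_iff _ inj).mpr (MvPolynomial.X_ne_zero (R := ℚ) 0)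
  intro h
  field_simp at h
  set A : MvPolynomial (Fin 2) ℚ := MvPolynomial.X 0 with hA
  set M : MvPolynomial (Fin 2) ℚ := MvPolynomial.X 1 with hM
  have key : (A ^ 12 - 2 * A ^ 10 * M ^ 2 + A ^ 8 * M ^ 2 + A ^ 8 * M ^ 4 - 2 * A ^ 6 * M ^ 4
        + A ^ 4 * M ^ 4 + 2 * A ^ 4 * M ^ 2 - 2 * A ^ 2 * M ^ 2 + A ^ 10 - A ^ 6
        + A ^ 6 * M ^ 2 - A ^ 4 + 1) * (A ^ 2 * A ^ 4)
      = ((M ^ 2 - A ^ 2 - 1) * A ^ 2 - 1)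
          * (A ^ 8 - A ^ 6 * M ^ 2 + 2 * A ^ 4 * M ^ 2 - A ^ 2 * M ^ 2 - A ^ 4 + 1) * A ^ 4 := by
    apply inj
    simp only [map_add, map_sub, map_mul, map_pow, map_one, map_ofNat]
    linear_combination a ^ 4 * h
  have h3 := congrArg (MvPolynomial.eval (fun _ => (1 : ℚ))) key
  simp [hA, hM] at h3
  norm_num at h3
end
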